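/- Let μ, λ ∈ ℂ with exp(λT) = μ, let φ ∈ ℂⁿ, and define v : ℝ → ℂⁿ by v(t) := exp(−λt)·(Φ(t)·φ). Then v(0) = φ, v satisfies the Carathéodory initial value problem v′(t) = (A(t) − λ·1)·v(t) for all t, and v is T-periodic (v(t+T) = v(t) for all t) if and only if Φ(T)·φ = μ·φ, i.e. if and only if (μ, φ) is an eigenpair of the monodromy matrix Φ(T). -/

import Mathlib

attribute [local instance] Matrix.normedAddCommGroup Matrix.normedSpace

open Matrix

/-- Matrix-vector multiplication, as a continuous linear map in the matrix argument. -/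
noncomputable def floquetMulVecCLM (n : ℕ) (ψ : Fin n → ℂ) :
    Matrix (Fin n) (Fin n) ℂ →L[ℂ] (Fin n → ℂ) :=
  LinearMap.toContinuousLinearMap
    { toFun := fun M => M.mulVec ψ
      map_add' := fun M N => Matrix.add_mulVec M N ψ
      map_smul' := fun a M => Matrix.smul_mulVec a M ψ }

lemma floquet_norm_mulVec_le {n : ℕ} (M : Matrix (Fin n) (Fin n) ℂ) (x : Fin n → ℂ) :
    ‖M.mulVec x‖ ≤ (n : ℝ) * ‖M‖ * ‖x‖ := by
  have hMx : (0:ℝ) ≤ ‖M‖ * ‖x‖ := mul_nonneg (norm_nonneg _) (norm_nonneg _)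
  have hnn : (0:ℝ) ≤ (n : ℝ) * ‖M‖ * ‖x‖ := by positivity
  rw [pi_norm_le_iff_of_nonneg hnn]
  intro i
  calc ‖M.mulVec x i‖ = ‖∑ j, M i j * x j‖ := rfl
    _ ≤ ∑ j, ‖M i j * x j‖ := norm_sum_le _ _
    _ ≤ ∑ _j : Fin n, ‖M‖ * ‖x‖ := by
        refine Finset.sum_le_sum fun j _ => ?_
        rw [norm_mul]
        exact mul_le_mul (M.norm_entry_le_entrywise_sup_norm) (norm_le_pi_norm x j)
          (norm_nonneg _) (norm_nonneg _)
    _ = (n : ℝ) * ‖M‖ * ‖x‖ := by simp [mul_assoc]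

/-- For `exp(λT) = μ` and `v(t) := exp(−λt)·Φ(t)·φ`: `v(0) = φ`, `v` solves
`v′ = (A(t) − λ·1)v`, and `v` is `T`-periodic iff `(μ, φ)` is an eigenpair of the monodromy
matrix `Φ(T)`. -/
theorem floquet_eigenvector_characterization
    (T : ℝ) (hT : 0 < T) (n : ℕ) (hn : 1 ≤ n)
    (A Φ : ℝ → Matrix (Fin n) (Fin n) ℂ)
    (hA : Continuous A) (hAper : ∀ t : ℝ, A (t + T) = A t)
    (hΦ0 : Φ 0 = 1) (hΦ : ∀ t : ℝ, HasDerivAt Φ (A t * Φ t) t)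
    (μ lam : ℂ) (hμ : Complex.exp (lam * T) = μ)
    (φ : Fin n → ℂ) (v : ℝ → Fin n → ℂ)
    (hv : ∀ t : ℝ, v t = Complex.exp (-(lam * t)) • (Φ t).mulVec φ) :
    v 0 = φ
    ∧ (∀ t : ℝ, HasDerivAt v ((A t - lam • (1 : Matrix (Fin n) (Fin n) ℂ)).mulVec (v t)) t)
    ∧ ((∀ t : ℝ, v (t + T) = v t) ↔ (Φ T).mulVec φ = μ • φ) := by
  -- derivative of `t ↦ Φ(t).mulVec ψ`
  have hder : ∀ (ψ : Fin n → ℂ) (t : ℝ),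
      HasDerivAt (fun s => (Φ s).mulVec ψ) ((A t).mulVec ((Φ t).mulVec ψ)) t := by
    intro ψ t
    have h := ((floquetMulVecCLM n ψ).restrictScalars ℝ).hasFDerivAt.comp_hasDerivAt t (hΦ t)
    have he : ((floquetMulVecCLM n ψ).restrictScalars ℝ) (A t * Φ t) = (A t).mulVec ((Φ t).mulVec ψ) := by
      simp [floquetMulVecCLM, LinearMap.toContinuousLinearMap, Matrix.mulVec_mulVec]
    exact h.congr_deriv he
  -- derivative of the scalar factor
  have hc : ∀ t : ℝ, HasDerivAt (fun s : ℝ => Complex.exp (-(lam * s)))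
      (-lam * Complex.exp (-(lam * t))) t := by
    intro t
    have h1 : HasDerivAt (fun s : ℝ => -(lam * (s : ℂ))) (-lam) t := by
      exact (((Complex.ofRealCLM.hasDerivAt (x := t)).const_mul lam).neg).congr_deriv (by simp)
    simpa [mul_comm] using h1.cexp
  have hv0 : v 0 = φ := by
    rw [hv 0]; simp [hΦ0, Matrix.one_mulVec]
  refine ⟨hv0, ?_, ?_⟩
  · -- the ODE for v
    intro t
    have hveq : v = fun s : ℝ => Complex.exp (-(lam * s)) • (Φ s).mulVec φ := funext hv
    rw [hveq]
    have h : HasDerivAt (fun s : ℝ => Complex.exp (-(lam * s)) • (Φ s).mulVec φ) _ t :=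
      (hc t).smul (hder φ t)
    simpa [Matrix.sub_mulVec, Matrix.smul_mulVec, Matrix.one_mulVec, Matrix.mulVec_smul,
      smul_smul, sub_eq_add_neg, neg_mul, mul_comm, add_mul, Matrix.add_mulVec, Matrix.neg_mulVec,
      Matrix.smul_mul, smul_add, smul_neg] using h
  · constructor
    · -- periodic → eigenpair
      intro hp
      have h0 := hp 0
      rw [zero_add, hv0, hv T] at h0
      have : Complex.exp (lam * T) • (Complex.exp (-(lam * T)) • (Φ T).mulVec φ)
          = Complex.exp (lam * T) • φ := by rw [h0]
      rwa [smul_smul, ← Complex.exp_add, add_neg_cancel, Complex.exp_zero, one_smul, hμ] at this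
    · -- eigenpair → periodic
      intro hmono t
      -- uniqueness of solutions: Φ(t+T)·φ = Φ(t)·(Φ(T)·φ)
      -- global Lipschitz constant
      obtain ⟨C₀, hC₀⟩ :=
        (isCompact_Icc (a := (0:ℝ)) (b := T)).exists_bound_of_continuousOn
          (hA.continuousOn (s := Set.Icc 0 T))
      set C : ℝ := max C₀ 0 with hCdef
      have hCnn : (0:ℝ) ≤ C := le_max_right _ _
      have hAb : ∀ s : ℝ, ‖A s‖ ≤ C := by
        intro s
        have hper : Function.Periodic A T := hAper
        obtain ⟨y, hy, hye⟩ := hper.exists_mem_Ico₀ hT s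
        rw [hye]
        exact le_trans (hC₀ y (Set.mem_Icc_of_Ico hy)) (le_max_left _ _)
      set K : NNReal := ⟨(n : ℝ) * C, by positivity⟩ with hKdef
      have hlip : ∀ s : ℝ, LipschitzWith K (fun x : Fin n → ℂ => (A s).mulVec x) := by
        intro s
        apply LipschitzWith.of_dist_le_mul
        intro x y
        rw [dist_eq_norm, dist_eq_norm, ← Matrix.mulVec_sub]
        calc ‖(A s).mulVec (x - y)‖ ≤ (n : ℝ) * ‖A s‖ * ‖x - y‖ :=
              floquet_norm_mulVec_le _ _
          _ ≤ (K : ℝ) * ‖x - y‖ := by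
              have : (n : ℝ) * ‖A s‖ ≤ (n : ℝ) * C :=
                mul_le_mul_of_nonneg_left (hAb s) (by positivity)
              exact mul_le_mul_of_nonneg_right this (norm_nonneg _)
      set c : Fin n → ℂ := (Φ T).mulVec φ with hcdef
      set f : ℝ → Fin n → ℂ := fun s => (Φ s).mulVec c with hfdef
      set g : ℝ → Fin n → ℂ := fun s => (Φ (s + T)).mulVec φ with hgdef
      have hf' : ∀ s : ℝ, HasDerivAt f ((A s).mulVec (f s)) s := fun s => hder c s
      have hg' : ∀ s : ℝ, HasDerivAt g ((A s).mulVec (g s)) s := by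
        intro s
        have h1 : HasDerivAt (fun u : ℝ => u + T) 1 s := (hasDerivAt_id s).add_const T
        have h2 := (hder φ (s + T)).scomp s h1
        simpa [g, hAper, Function.comp_def] using h2
      have heq0 : f 0 = g 0 := by simp [f, g, hΦ0, Matrix.one_mulVec, hcdef]
      have hEq : ∀ s : ℝ, f s = g s := by
        intro s
        have hmem : s ∈ Set.Icc (-(|s| + 1)) (|s| + 1) :=
          ⟨le_trans (by linarith [neg_abs_le s]) le_rfl |>.trans (neg_abs_le s) |>.trans le_rfl,
            le_trans (le_abs_self s) (by linarith)⟩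
        have h0mem : (0:ℝ) ∈ Set.Ioo (-(|s| + 1)) (|s| + 1) := by
          constructor <;> [linarith [abs_nonneg s]; linarith [abs_nonneg s]]
        have := ODE_solution_unique_of_mem_Icc
          (v := fun s x => (A s).mulVec x) (s := fun _ => (Set.univ : Set (Fin n → ℂ)))
          (fun s _ => (hlip s).lipschitzOnWith) h0mem
          (Continuous.continuousOn (continuous_iff_continuousAt.2 fun x => (hf' x).continuousAt))
          (fun u _ => hf' u) (fun _ _ => trivial)
          (Continuous.continuousOn (continuous_iff_continuousAt.2 fun x => (hg' x).continuousAt))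
          (fun u _ => hg' u) (fun _ _ => trivial) heq0
        exact this hmem
      have key : (Φ (t + T)).mulVec φ = μ • (Φ t).mulVec φ := by
        have h1 : g t = f t := (hEq t).symm
        simp only [f, g, hmono, Matrix.mulVec_smul] at h1
        exact h1
      rw [hv (t + T), hv t, key, smul_smul]
      congr 1
      rw [← hμ, ← Complex.exp_add]
      congr 1
      push_cast
      ring
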